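/- Let (b,c,d) be a triad in the real Cayley–Dickson algebra 𝔸ₙ (all εᵢ = 1). Then the Moufang identity d·(b·(d·c)) = ((d·b)·d)·c holds if and only if [b,c,d] ≠ 0; and the Moufang identity b·(d·(c·d)) = ((b·d)·c)·d holds if and only if [c,b,d] ≠ 0. -/

import Mathlib

noncomputable section

/-- The real Cayley–Dickson algebra carrier: `CD 0 = ℝ`, `CD (n+1) = CD n × CD n`. -/
def CD : ℕ → Type
  | 0 => ℝ
  | n + 1 => CD n × CD n

instance CD.instAddCommGroup : (n : ℕ) → AddCommGroup (CD n)
  | 0 => inferInstanceAs (AddCommGroup ℝ)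
  | n + 1 =>
    letI := CD.instAddCommGroup n
    inferInstanceAs (AddCommGroup (CD n × CD n))

instance CD.instModule : (n : ℕ) → Module ℝ (CD n)
  | 0 => inferInstanceAs (Module ℝ ℝ)
  | n + 1 =>
    letI := CD.instModule n
    inferInstanceAs (Module ℝ (CD n × CD n))

/-- The unit of the Cayley–Dickson algebra. -/
def CD.one : (n : ℕ) → CD n
  | 0 => (1 : ℝ)
  | n + 1 => (CD.one n, 0)

/-- Conjugation: `(a, b)* = (a*, -b)`, identity on `ℝ`. -/
def CD.conj : (n : ℕ) → CD n → CD n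
  | 0, a => a
  | n + 1, x => (CD.conj n x.1, -x.2)

/-- Cayley–Dickson multiplication with sign vector `ε`:
`(a,b)·(c,d) = (a·c − ε (n+1) • (d*·b), d·a + b·c*)`. -/
def CD.mul (ε : ℕ → ℝ) : (n : ℕ) → CD n → CD n → CD n
  | 0, a, c => (show ℝ from a) * (show ℝ from c)
  | n + 1, x, y =>
    (CD.mul ε n x.1 y.1 - ε (n + 1) • CD.mul ε n (CD.conj n y.2) x.2,
     CD.mul ε n y.2 x.1 + CD.mul ε n x.2 (CD.conj n y.1))

/-- The standard basis element `e α` of `CD n`, for `α ⊆ {1,…,n}`. -/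
def CD.basis : (n : ℕ) → Finset ℕ → CD n
  | 0, _ => (1 : ℝ)
  | n + 1, α =>
    if n + 1 ∈ α then ((0 : CD n), CD.basis n (α.erase (n + 1)))
    else (CD.basis n α, (0 : CD n))

/-- `α` indexes a pure basis element of `CD n`. -/
def CD.IsPure (n : ℕ) (α : Finset ℕ) : Prop :=
  α.Nonempty ∧ α ⊆ Finset.Icc 1 n

/-- The associator `[x,y,z] = (x·y)·z − x·(y·z)`. -/
def CD.assoc (ε : ℕ → ℝ) (n : ℕ) (x y z : CD n) : CD n :=
  CD.mul ε n (CD.mul ε n x y) z - CD.mul ε n x (CD.mul ε n y z)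

/-- A triad: indices of three pairwise distinct pure basis elements `b, c, d`
with `d ≠ ±(b·c)` (all signs `εᵢ = 1`). -/
def CD.IsTriad (n : ℕ) (α β γ : Finset ℕ) : Prop :=
  CD.IsPure n α ∧ CD.IsPure n β ∧ CD.IsPure n γ ∧
  α ≠ β ∧ α ≠ γ ∧ β ≠ γ ∧
  CD.basis n γ ≠ CD.mul (fun _ => 1) n (CD.basis n α) (CD.basis n β) ∧
  CD.basis n γ ≠ -CD.mul (fun _ => 1) n (CD.basis n α) (CD.basis n β)

/-- Multiplication with all signs `εᵢ = 1`. -/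
abbrev CD.mul1 (n : ℕ) : CD n → CD n → CD n := CD.mul (fun _ => 1) n

/-- Associator with all signs `εᵢ = 1`. -/
abbrev CD.assoc1 (n : ℕ) : CD n → CD n → CD n → CD n := CD.assoc (fun _ => 1) n

namespace CD


variable (ε : ℕ → ℝ)

lemma add_def {n : ℕ} (x y : CD (n+1)) : x + y = (x.1 + y.1, x.2 + y.2) := rfl
lemma neg_def {n : ℕ} (x : CD (n+1)) : -x = (-x.1, -x.2) := rfl
lemma sub_def {n : ℕ} (x y : CD (n+1)) : x - y = (x.1 - y.1, x.2 - y.2) := rfl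
lemma smul_def {n : ℕ} (s : ℝ) (x : CD (n+1)) : s • x = (s • x.1, s • x.2) := rfl
lemma zero_def {n : ℕ} : (0 : CD (n+1)) = ((0 : CD n), (0 : CD n)) := rfl

lemma mul_succ {n : ℕ} (x y : CD (n+1)) :
    mul ε (n+1) x y
      = (mul ε n x.1 y.1 - ε (n + 1) • mul ε n (conj n y.2) x.2,
         mul ε n y.2 x.1 + mul ε n x.2 (conj n y.1)) := rfl

lemma mul_pair {n : ℕ} (a b c d : CD n) :
    mul ε (n+1) (a, b) (c, d)
      = (mul ε n a c - ε (n + 1) • mul ε n (conj n d) b,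
         mul ε n d a + mul ε n b (conj n c)) := rfl



lemma pair_eq_iff {n : ℕ} {a b c d : CD n} :
    ((a, b) : CD (n+1)) = ((c, d) : CD (n+1)) ↔ a = c ∧ b = d :=
  Iff.of_eq (Prod.mk.injEq a b c d)

lemma pair_fst_snd {n : ℕ} (x : CD (n+1)) : ((x.1, x.2) : CD (n+1)) = x := rfl


lemma conj_zero : ∀ n, conj n (0 : CD n) = 0
  | 0 => rfl
  | n + 1 => by
    erw [zero_def]; simp only [conj]; erw [pair_eq_iff]
    exact ⟨conj_zero n, neg_zero⟩

lemma zero_mul_mul_zero : ∀ n (x : CD n), mul ε n 0 x = 0 ∧ mul ε n x 0 = 0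
  | 0, x => ⟨zero_mul (show ℝ from x), mul_zero (show ℝ from x)⟩
  | n + 1, x => by
    have h1 := fun (a : CD n) => (zero_mul_mul_zero n a).1
    have h2 := fun (a : CD n) => (zero_mul_mul_zero n a).2
    constructor <;> rw [mul_succ, zero_def] <;>
      simp only [conj_zero, h1, h2] <;>
      erw [pair_eq_iff] <;> constructor <;> simp

lemma zero_mul' (n : ℕ) (x : CD n) : mul ε n 0 x = 0 := (zero_mul_mul_zero ε n x).1
lemma mul_zero' (n : ℕ) (x : CD n) : mul ε n x 0 = 0 := (zero_mul_mul_zero ε n x).2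

lemma conj_neg : ∀ n (x : CD n), conj n (-x) = -conj n x
  | 0, x => rfl
  | n + 1, x => by
    rw [neg_def x]; simp only [conj]
    erw [show -((conj n x.1, -x.2) : CD (n+1)) = (-(conj n x.1), -(-x.2)) from rfl, pair_eq_iff]
    exact ⟨conj_neg n _, rfl⟩

lemma conj_smul : ∀ n (s : ℝ) (x : CD n), conj n (s • x) = s • conj n x
  | 0, s, x => rfl
  | n + 1, s, x => by
    rw [smul_def s x]; simp only [conj]
    erw [show s • ((conj n x.1, -x.2) : CD (n+1)) = (s • conj n x.1, s • (-x.2)) from rfl, pair_eq_iff]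
    exact ⟨conj_smul n _ _, (smul_neg s x.2).symm⟩

lemma conj_conj : ∀ n (x : CD n), conj n (conj n x) = x
  | 0, x => rfl
  | n + 1, x => by
    rw [show conj (n+1) x = (conj n x.1, -x.2) from rfl]; simp only [conj]
    erw [← pair_fst_snd x, pair_eq_iff]
    exact ⟨conj_conj n _, by simp⟩

lemma neg_mul_mul_neg : ∀ n (x y : CD n),
    mul ε n (-x) y = -mul ε n x y ∧ mul ε n x (-y) = -mul ε n x y
  | 0, x, y => ⟨neg_mul (show ℝ from x) y, mul_neg (show ℝ from x) y⟩
  | n + 1, x, y => by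
    have h1 := fun (a b : CD n) => (neg_mul_mul_neg n a b).1
    have h2 := fun (a b : CD n) => (neg_mul_mul_neg n a b).2
    constructor <;>
      [rw [mul_succ, mul_succ, neg_def x]; rw [mul_succ, mul_succ, neg_def y]] <;>
      simp only [conj_neg, h1, h2, smul_neg] <;>
      erw [show -((mul ε n x.1 y.1 - ε (n + 1) • mul ε n (conj n y.2) x.2,
            mul ε n y.2 x.1 + mul ε n x.2 (conj n y.1)) : CD (n+1))
          = (-(mul ε n x.1 y.1 - ε (n + 1) • mul ε n (conj n y.2) x.2),
             -(mul ε n y.2 x.1 + mul ε n x.2 (conj n y.1))) from rfl, pair_eq_iff] <;>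
      constructor <;> abel

lemma neg_mul' (n : ℕ) (x y : CD n) : mul ε n (-x) y = -mul ε n x y :=
  (neg_mul_mul_neg ε n x y).1
lemma mul_neg' (n : ℕ) (x y : CD n) : mul ε n x (-y) = -mul ε n x y :=
  (neg_mul_mul_neg ε n x y).2

lemma smul_mul_mul_smul : ∀ n (s : ℝ) (x y : CD n),
    mul ε n (s • x) y = s • mul ε n x y ∧ mul ε n x (s • y) = s • mul ε n x y
  | 0, s, x, y => ⟨smul_mul_assoc s (show ℝ from x) y, mul_smul_comm s (show ℝ from x) y⟩
  | n + 1, s, x, y => by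
    have h1 := fun (a b : CD n) => (smul_mul_mul_smul n s a b).1
    have h2 := fun (a b : CD n) => (smul_mul_mul_smul n s a b).2
    constructor <;>
      [rw [mul_succ, mul_succ, smul_def s x]; rw [mul_succ, mul_succ, smul_def s y]] <;>
      simp only [conj_smul, h1, h2] <;>
      erw [show s • ((mul ε n x.1 y.1 - ε (n + 1) • mul ε n (conj n y.2) x.2,
            mul ε n y.2 x.1 + mul ε n x.2 (conj n y.1)) : CD (n+1))
          = (s • (mul ε n x.1 y.1 - ε (n + 1) • mul ε n (conj n y.2) x.2),
             s • (mul ε n y.2 x.1 + mul ε n x.2 (conj n y.1))) from rfl, pair_eq_iff] <;>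
      constructor <;> first
        | rw [smul_add]
        | rw [smul_sub, smul_comm (ε (n+1)) s]

lemma smul_mul' (n : ℕ) (s : ℝ) (x y : CD n) : mul ε n (s • x) y = s • mul ε n x y :=
  (smul_mul_mul_smul ε n s x y).1
lemma mul_smul' (n : ℕ) (s : ℝ) (x y : CD n) : mul ε n x (s • y) = s • mul ε n x y :=
  (smul_mul_mul_smul ε n s x y).2

lemma conj_one : ∀ n, conj n (one n) = one n
  | 0 => rfl
  | n + 1 => by
    rw [show one (n+1) = (one n, (0 : CD n)) from rfl]; simp only [conj]
    erw [pair_eq_iff]; exact ⟨conj_one n, neg_zero⟩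

lemma one_mul_mul_one : ∀ n (x : CD n), mul ε n (one n) x = x ∧ mul ε n x (one n) = x
  | 0, x => ⟨one_mul (show ℝ from x), mul_one (show ℝ from x)⟩
  | n + 1, x => by
    constructor <;>
      rw [mul_succ, show one (n+1) = (one n, (0 : CD n)) from rfl] <;>
      simp only [conj_zero, conj_one, zero_mul', mul_zero',
        (one_mul_mul_one n _).1, (one_mul_mul_one n _).2] <;>
      erw [← pair_fst_snd x, pair_eq_iff] <;> constructor <;> simp

lemma one_mul' (n : ℕ) (x : CD n) : mul ε n (one n) x = x := (one_mul_mul_one ε n x).1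
lemma mul_one' (n : ℕ) (x : CD n) : mul ε n x (one n) = x := (one_mul_mul_one ε n x).2

lemma conj_add : ∀ n (x y : CD n), conj n (x + y) = conj n x + conj n y
  | 0, x, y => rfl
  | n + 1, x, y => by
    rw [add_def x y]; simp only [conj]
    erw [show ((conj n x.1, -x.2) : CD (n+1)) + (conj n y.1, -y.2)
        = ((conj n x.1 + conj n y.1, -x.2 + -y.2) : CD (n+1)) from rfl, pair_eq_iff]
    exact ⟨conj_add n _ _, by abel⟩

lemma conj_sub (n : ℕ) (x y : CD n) : conj n (x - y) = conj n x - conj n y := by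
  rw [sub_eq_add_neg, conj_add, conj_neg, ← sub_eq_add_neg]

lemma conj_mul : ∀ n (x y : CD n), conj n (mul ε n x y) = mul ε n (conj n y) (conj n x)
  | 0, x, y => mul_comm (show ℝ from x) y
  | n + 1, x, y => by
    rw [mul_succ, mul_succ]
    simp only [conj]
    erw [pair_eq_iff]
    constructor <;>
      simp only [conj_sub, conj_add, conj_smul, conj_neg, conj_conj, neg_mul',
        mul_neg', conj_mul n, neg_neg, smul_neg] <;> abel

/-- sign of conjugation on a basis element -/
def sgn (α : Finset ℕ) : ℝ := if α = ∅ then 1 else -1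

lemma sgn_mul_self (α : Finset ℕ) : sgn α * sgn α = 1 := by
  unfold sgn; split <;> norm_num

lemma sgn_empty : sgn ∅ = 1 := rfl
lemma sgn_of_ne (α : Finset ℕ) (h : α ≠ ∅) : sgn α = -1 := if_neg h



lemma basis_succ_mem {n : ℕ} {α : Finset ℕ} (h : n + 1 ∈ α) :
    basis (n+1) α = ((0 : CD n), basis n (α.erase (n+1))) := by
  erw [basis, if_pos h]

lemma basis_succ_not {n : ℕ} {α : Finset ℕ} (h : n + 1 ∉ α) :
    basis (n+1) α = (basis n α, (0 : CD n)) := by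
  erw [basis, if_neg h]

lemma subset_Icc_of_not_mem {n : ℕ} {α : Finset ℕ}
    (hs : α ⊆ Finset.Icc 1 (n+1)) (h : n + 1 ∉ α) : α ⊆ Finset.Icc 1 n := by
  intro a ha
  have := hs ha
  rw [Finset.mem_Icc] at this ⊢
  have : a ≠ n + 1 := fun e => h (e ▸ ha)
  omega

lemma erase_subset_Icc {n : ℕ} {α : Finset ℕ} (hs : α ⊆ Finset.Icc 1 (n+1)) :
    α.erase (n+1) ⊆ Finset.Icc 1 n := by
  intro a ha
  rw [Finset.mem_erase] at ha
  have := hs ha.2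
  rw [Finset.mem_Icc] at this ⊢
  have := ha.1
  omega

lemma basis_empty : ∀ n, basis n ∅ = one n
  | 0 => rfl
  | n + 1 => by
    rw [basis_succ_not (by simp), basis_empty n]; rfl

lemma basis_ne_zero : ∀ n (α : Finset ℕ), basis n α ≠ 0
  | 0, α => by show (1:ℝ) ≠ (0:ℝ); norm_num
  | n + 1, α => by
    by_cases h : n + 1 ∈ α
    · erw [basis_succ_mem h, zero_def, Ne, pair_eq_iff]
      exact fun hh => basis_ne_zero n _ hh.2
    · erw [basis_succ_not h, zero_def, Ne, pair_eq_iff]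
      exact fun hh => basis_ne_zero n _ hh.1

lemma conj_basis : ∀ n (α : Finset ℕ), α ⊆ Finset.Icc 1 n →
    conj n (basis n α) = sgn α • basis n α
  | 0, α, h => by
    have : α = ∅ := Finset.subset_empty.mp (by simpa using h)
    subst this
    rw [sgn_empty, one_smul]; rfl
  | n + 1, α, h => by
    by_cases hm : n + 1 ∈ α
    · rw [basis_succ_mem hm]
      simp only [conj, conj_zero]
      erw [sgn_of_ne _ (Finset.ne_empty_of_mem hm), smul_def, pair_eq_iff]
      constructor
      · simp
      · rw [neg_one_smul]
    · rw [basis_succ_not hm]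
      simp only [conj, conj_zero]
      erw [conj_basis n α (subset_Icc_of_not_mem h hm), smul_def, pair_eq_iff]
      exact ⟨rfl, by simp⟩

local notation "m" => CD.mul (fun _ => (1:ℝ))

lemma quasi_alt : ∀ n (α : Finset ℕ), α ⊆ Finset.Icc 1 n → ∀ x : CD n,
    m n (basis n α) (m n (basis n α) x) = sgn α • x ∧
    m n (m n x (basis n α)) (basis n α) = sgn α • x
  | 0, α, h, x => by
    have : α = ∅ := Finset.subset_empty.mp (by simpa using h)
    subst this
    rw [basis_empty, sgn_empty, one_smul]
    exact ⟨by rw [one_mul', one_mul'], by rw [mul_one', mul_one']⟩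
  | n + 1, α, h, x => by
    by_cases hm : n + 1 ∈ α
    · have hsub : α.erase (n+1) ⊆ Finset.Icc 1 n := erase_subset_Icc h
      have h1 := fun y => (quasi_alt n _ hsub y).1
      have h2 := fun y => (quasi_alt n _ hsub y).2
      have hcb := conj_basis n _ hsub
      rw [basis_succ_mem hm, sgn_of_ne _ (Finset.ne_empty_of_mem hm), ← pair_fst_snd x]
      constructor <;>
        simp only [mul_succ, mul_pair, conj, conj_zero, conj_neg, conj_smul, conj_conj,
          conj_mul, hcb, zero_mul', mul_zero', neg_mul', mul_neg', smul_mul',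
          mul_smul', one_smul, smul_neg, neg_neg, smul_smul, sgn_mul_self,
          h1, h2, neg_zero, zero_sub, sub_zero, zero_add, add_zero, smul_zero] <;>
        erw [show (-1 : ℝ) • ((x.1, x.2) : CD (n+1)) = ((-x.1, -x.2) : CD (n+1)) from by
          erw [smul_def]; erw [pair_eq_iff]; constructor <;> rw [neg_one_smul],
          pair_eq_iff] <;>
        constructor <;> simp [h1, h2, smul_smul, sgn_mul_self]
    · have hsub : α ⊆ Finset.Icc 1 n := subset_Icc_of_not_mem h hm
      have h1 := fun y => (quasi_alt n _ hsub y).1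
      have h2 := fun y => (quasi_alt n _ hsub y).2
      have hcb := conj_basis n _ hsub
      rw [basis_succ_not hm, ← pair_fst_snd x]
      constructor <;>
        simp only [mul_succ, mul_pair, conj, conj_zero, conj_neg, conj_smul, conj_conj,
          conj_mul, hcb, zero_mul', mul_zero', neg_mul', mul_neg', smul_mul',
          mul_smul', one_smul, smul_neg, neg_neg, smul_smul, sgn_mul_self,
          h1, h2, neg_zero, zero_sub, sub_zero, zero_add, add_zero, smul_zero] <;>
        erw [smul_def, pair_eq_iff] <;>
        constructor <;> simp [h1, h2, smul_smul, sgn_mul_self]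

lemma sgn_cases (α : Finset ℕ) : sgn α = 1 ∨ sgn α = -1 := by
  unfold sgn; split <;> simp

open scoped symmDiff

lemma key_anticomm : ∀ n (α β : Finset ℕ), α ⊆ Finset.Icc 1 n → β ⊆ Finset.Icc 1 n →
    α ≠ β → m n (conj n (basis n β)) (basis n α) = -(m n (conj n (basis n α)) (basis n β))
  | 0, α, β, ha, hb, hne => by
    exact absurd (by
      have h1 : α = ∅ := Finset.subset_empty.mp (by simpa using ha)
      have h2 : β = ∅ := Finset.subset_empty.mp (by simpa using hb)
      rw [h1, h2]) hne
  | n + 1, α, β, ha, hb, hne => by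
    by_cases hma : n + 1 ∈ α <;> by_cases hmb : n + 1 ∈ β
    · have hea : α.erase (n+1) ⊆ Finset.Icc 1 n := erase_subset_Icc ha
      have heb : β.erase (n+1) ⊆ Finset.Icc 1 n := erase_subset_Icc hb
      have hne' : β.erase (n+1) ≠ α.erase (n+1) := by
        intro hcontra
        apply hne
        rw [← Finset.insert_erase hma, ← Finset.insert_erase hmb, hcontra]
      have ih := key_anticomm n _ _ heb hea hne'
      rw [basis_succ_mem hma, basis_succ_mem hmb]
      simp only [mul_succ, mul_pair, conj, conj_zero, conj_neg, zero_mul', mul_zero',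
        neg_mul', mul_neg', one_smul, neg_zero, neg_neg, zero_sub, sub_zero,
        zero_add, add_zero, smul_neg]
      erw [ih, neg_def, pair_eq_iff]
      exact ⟨rfl, neg_zero.symm⟩
    · rw [basis_succ_mem hma, basis_succ_not hmb]
      simp only [mul_succ, mul_pair, conj, conj_zero, conj_neg, zero_mul', mul_zero',
        neg_mul', mul_neg', one_smul, neg_zero, neg_neg, zero_sub, sub_zero,
        zero_add, add_zero, smul_neg]
      erw [neg_def, pair_eq_iff]
      refine ⟨?_, ?_⟩ <;> simp [smul_smul] <;> abel
    · rw [basis_succ_not hma, basis_succ_mem hmb]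
      simp only [mul_succ, mul_pair, conj, conj_zero, conj_neg, zero_mul', mul_zero',
        neg_mul', mul_neg', one_smul, neg_zero, neg_neg, zero_sub, sub_zero,
        zero_add, add_zero, smul_neg]
      erw [neg_def, pair_eq_iff]
      refine ⟨?_, ?_⟩ <;> simp [smul_smul] <;> abel
    · have hea : α ⊆ Finset.Icc 1 n := subset_Icc_of_not_mem ha hma
      have heb : β ⊆ Finset.Icc 1 n := subset_Icc_of_not_mem hb hmb
      have ih := key_anticomm n _ _ hea heb hne
      rw [basis_succ_not hma, basis_succ_not hmb]
      simp only [mul_succ, mul_pair, conj, conj_zero, conj_neg, zero_mul', mul_zero',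
        neg_mul', mul_neg', one_smul, neg_zero, neg_neg, zero_sub, sub_zero,
        zero_add, add_zero, smul_neg]
      erw [neg_def, pair_eq_iff]
      exact ⟨by rw [ih], by simp⟩

/-- anticommutativity of distinct pure basis elements -/
lemma basis_anticomm {n : ℕ} {α β : Finset ℕ} (ha : α ⊆ Finset.Icc 1 n)
    (hb : β ⊆ Finset.Icc 1 n) (hea : α ≠ ∅) (heb : β ≠ ∅) (hne : α ≠ β) :
    m n (basis n α) (basis n β) = -(m n (basis n β) (basis n α)) := by
  have k := key_anticomm n α β ha hb hne
  rw [conj_basis n α ha, conj_basis n β hb, sgn_of_ne _ hea, sgn_of_ne _ heb,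
    neg_one_smul, neg_one_smul, neg_mul', neg_mul'] at k
  rw [← neg_neg (m n (basis n α) (basis n β)), k]

lemma mul_basis : ∀ n (α β : Finset ℕ), α ⊆ Finset.Icc 1 n → β ⊆ Finset.Icc 1 n →
    ∃ s : ℝ, (s = 1 ∨ s = -1) ∧
      m n (basis n α) (basis n β) = s • basis n (α ∆ β)
  | 0, α, β, ha, hb =>
    ⟨1, Or.inl rfl, by rw [one_smul]; show (1:ℝ) * (1:ℝ) = (1:ℝ); exact mul_one 1⟩
  | n + 1, α, β, ha, hb => by
    by_cases hma : n + 1 ∈ α <;> by_cases hmb : n + 1 ∈ β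
    · -- both contain n+1
      have hea : α.erase (n+1) ⊆ Finset.Icc 1 n := erase_subset_Icc ha
      have heb : β.erase (n+1) ⊆ Finset.Icc 1 n := erase_subset_Icc hb
      obtain ⟨s, hs, hmul⟩ := mul_basis n _ _ heb hea
      have hset : α ∆ β = (β.erase (n+1)) ∆ (α.erase (n+1)) := by
        ext a; simp only [Finset.mem_symmDiff, Finset.mem_erase]
        by_cases hX : a = n + 1
        · subst hX; tauto
        · tauto
      have hnm : n + 1 ∉ α ∆ β := by
        rw [Finset.mem_symmDiff]; tauto
      refine ⟨-(sgn (β.erase (n+1)) * s), ?_, ?_⟩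
      · rcases sgn_cases (β.erase (n+1)) with h | h <;> rcases hs with h' | h' <;>
          rw [h, h'] <;> norm_num
      · rw [basis_succ_mem hma, basis_succ_mem hmb, basis_succ_not hnm, hset]
        simp only [mul_succ, mul_pair, conj, conj_zero, zero_mul', mul_zero', one_smul,
          neg_zero, zero_sub, sub_zero, zero_add, add_zero]
        erw [conj_basis n _ heb, smul_mul', hmul, smul_def, pair_eq_iff]
        constructor
        · rw [smul_smul, neg_smul]
        · rw [smul_zero]
    · -- n+1 ∈ α only
      have hea : α.erase (n+1) ⊆ Finset.Icc 1 n := erase_subset_Icc ha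
      have heb : β ⊆ Finset.Icc 1 n := subset_Icc_of_not_mem hb hmb
      obtain ⟨s, hs, hmul⟩ := mul_basis n _ _ hea heb
      have hnm : n + 1 ∈ α ∆ β := by
        rw [Finset.mem_symmDiff]; tauto
      have hset : (α ∆ β).erase (n+1) = (α.erase (n+1)) ∆ β := by
        ext a; simp only [Finset.mem_symmDiff, Finset.mem_erase]
        by_cases hX : a = n + 1
        · subst hX; tauto
        · tauto
      refine ⟨sgn β * s, ?_, ?_⟩
      · rcases sgn_cases β with h | h <;> rcases hs with h' | h' <;>
          rw [h, h'] <;> norm_num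
      · rw [basis_succ_mem hma, basis_succ_not hmb, basis_succ_mem hnm, hset]
        simp only [mul_succ, mul_pair, conj, conj_zero, zero_mul', mul_zero', one_smul,
          neg_zero, zero_sub, sub_zero, zero_add, add_zero, smul_zero, neg_zero]
        erw [conj_basis n _ heb, mul_smul', hmul, smul_def, pair_eq_iff]
        exact ⟨by rw [smul_zero], by rw [smul_smul]⟩
    · -- n+1 ∈ β only
      have hea : α ⊆ Finset.Icc 1 n := subset_Icc_of_not_mem ha hma
      have heb : β.erase (n+1) ⊆ Finset.Icc 1 n := erase_subset_Icc hb
      obtain ⟨s, hs, hmul⟩ := mul_basis n _ _ heb hea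
      have hnm : n + 1 ∈ α ∆ β := by
        rw [Finset.mem_symmDiff]; tauto
      have hset : (α ∆ β).erase (n+1) = (β.erase (n+1)) ∆ α := by
        ext a; simp only [Finset.mem_symmDiff, Finset.mem_erase]
        by_cases hX : a = n + 1
        · subst hX; tauto
        · tauto
      refine ⟨s, hs, ?_⟩
      rw [basis_succ_not hma, basis_succ_mem hmb, basis_succ_mem hnm, hset]
      simp only [mul_succ, mul_pair, conj, conj_zero, zero_mul', mul_zero', one_smul,
        neg_zero, zero_sub, sub_zero, zero_add, add_zero, smul_zero]
      erw [hmul, smul_def, pair_eq_iff]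
      exact ⟨by rw [smul_zero], rfl⟩
    · -- neither
      have hea : α ⊆ Finset.Icc 1 n := subset_Icc_of_not_mem ha hma
      have heb : β ⊆ Finset.Icc 1 n := subset_Icc_of_not_mem hb hmb
      obtain ⟨s, hs, hmul⟩ := mul_basis n _ _ hea heb
      have hnm : n + 1 ∉ α ∆ β := by
        rw [Finset.mem_symmDiff]; tauto
      refine ⟨s, hs, ?_⟩
      rw [basis_succ_not hma, basis_succ_not hmb, basis_succ_not hnm]
      simp only [mul_succ, mul_pair, conj, conj_zero, zero_mul', mul_zero', one_smul,
        neg_zero, zero_sub, sub_zero, zero_add, add_zero, smul_zero]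
      erw [hmul, smul_def, pair_eq_iff]
      exact ⟨rfl, by rw [smul_zero]⟩

lemma smul_eq_zero_iff' : ∀ n (s : ℝ) (x : CD n), s • x = 0 → s = 0 ∨ x = 0
  | 0, s, x, h => smul_eq_zero.mp h
  | n + 1, s, x, h => by
    erw [← pair_fst_snd x, smul_def, zero_def, pair_eq_iff] at h
    rcases smul_eq_zero_iff' n s x.1 h.1 with h1 | h1
    · exact Or.inl h1
    rcases smul_eq_zero_iff' n s x.2 h.2 with h2 | h2
    · exact Or.inl h2
    · right; rw [← pair_fst_snd x, h1, h2]; rfl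

lemma smul_cancel {n : ℕ} {s t : ℝ} {x : CD n} (hx : x ≠ 0) (h : s • x = t • x) :
    s = t := by
  have : (s - t) • x = 0 := by rw [sub_smul, h, sub_self]
  rcases smul_eq_zero_iff' n _ _ this with h' | h'
  · linarith [h']
  · exact absurd h' hx

lemma symmDiff_subset_Icc {n : ℕ} {α β : Finset ℕ} (ha : α ⊆ Finset.Icc 1 n)
    (hb : β ⊆ Finset.Icc 1 n) : α ∆ β ⊆ Finset.Icc 1 n := by
  intro a haa
  rw [Finset.mem_symmDiff] at haa
  rcases haa with ⟨h1, _⟩ | ⟨h1, _⟩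
  · exact ha h1
  · exact hb h1


end CD

open scoped symmDiff

/-- (Moufang associativity.) For a triad `(b,c,d)`:
`d·(b·(d·c)) = ((d·b)·d)·c ↔ [b,c,d] ≠ 0`, and
`b·(d·(c·d)) = ((b·d)·c)·d ↔ [c,b,d] ≠ 0`. -/
theorem stmt9 (n : ℕ) (α β γ : Finset ℕ) (h : CD.IsTriad n α β γ)
    (b c d : CD n) (hb : b = CD.basis n α) (hc : c = CD.basis n β)
    (hd : d = CD.basis n γ) :
    (CD.mul1 n d (CD.mul1 n b (CD.mul1 n d c))
        = CD.mul1 n (CD.mul1 n (CD.mul1 n d b) d) c ↔ CD.assoc1 n b c d ≠ 0) ∧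
    (CD.mul1 n b (CD.mul1 n d (CD.mul1 n c d))
        = CD.mul1 n (CD.mul1 n (CD.mul1 n b d) c) d ↔ CD.assoc1 n c b d ≠ 0) := by
  obtain ⟨⟨hαne, hαs⟩, ⟨hβne, hβs⟩, ⟨hγne, hγs⟩, hab, hag, hbg, hd1, hd2⟩ := h
  subst hb; subst hc; subst hd
  have hαe : α ≠ ∅ := Finset.nonempty_iff_ne_empty.mp hαne
  have hβe : β ≠ ∅ := Finset.nonempty_iff_ne_empty.mp hβne
  have hγe : γ ≠ ∅ := Finset.nonempty_iff_ne_empty.mp hγne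
  obtain ⟨s1, hs1, hp1⟩ := CD.mul_basis n α β hαs hβs
  have hγab : γ ≠ α ∆ β := by
    intro e
    rcases hs1 with h' | h'
    · exact hd1 (by rw [hp1, h', one_smul, ← e])
    · exact hd2 (by rw [hp1, h', ← e, neg_one_smul, neg_neg])
  have hABs : α ∆ β ⊆ Finset.Icc 1 n := CD.symmDiff_subset_Icc hαs hβs
  have hAs : (α ∆ β ∆ γ) ⊆ Finset.Icc 1 n := CD.symmDiff_subset_Icc hABs hγs
  have hABe : α ∆ β ≠ ∅ := by
    intro e
    exact hab (by simpa [symmDiff_eq_bot] using e)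
  have hAe : (α ∆ β ∆ γ) ≠ ∅ := by
    intro e
    exact hγab (symmDiff_eq_bot.mp e).symm
  have hAγ : (α ∆ β ∆ γ) ≠ γ := by
    intro e
    apply hABe
    have := congrArg (· ∆ γ) e
    simp only [symmDiff_symmDiff_cancel_right, symmDiff_self] at this
    simpa using this
  have hE : (CD.basis n (α ∆ β ∆ γ)) ≠ 0 := CD.basis_ne_zero n (α ∆ β ∆ γ)
  obtain ⟨s2, hs2, hp2⟩ := CD.mul_basis n (α ∆ β) γ hABs hγs
  obtain ⟨s3, hs3, hp3⟩ := CD.mul_basis n β γ hβs hγs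
  obtain ⟨s4, hs4, hp4⟩ := CD.mul_basis n α (β ∆ γ) hαs (CD.symmDiff_subset_Icc hβs hγs)
  have hassocSet : α ∆ (β ∆ γ) = (α ∆ β ∆ γ) := (symmDiff_assoc α β γ).symm
  rw [hassocSet] at hp4
  have h_bc_d : CD.mul (fun _ => (1:ℝ)) n (CD.mul (fun _ => (1:ℝ)) n (CD.basis n α) (CD.basis n β)) (CD.basis n γ) = (s1 * s2) • (CD.basis n (α ∆ β ∆ γ)) := by
    rw [hp1, CD.smul_mul', hp2, smul_smul]
  have h_b_cd : CD.mul (fun _ => (1:ℝ)) n (CD.basis n α) (CD.mul (fun _ => (1:ℝ)) n (CD.basis n β) (CD.basis n γ)) = (s3 * s4) • (CD.basis n (α ∆ β ∆ γ)) := by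
    rw [hp3, CD.mul_smul', hp4, smul_smul, mul_comm]
  have hq1 := fun x => (CD.quasi_alt n γ hγs x).1
  have hq2 := fun x => (CD.quasi_alt n γ hγs x).2
  rw [CD.sgn_of_ne _ hγe] at hq1 hq2
  have hdb : CD.mul (fun _ => (1:ℝ)) n (CD.basis n γ) (CD.basis n α) = -(CD.mul (fun _ => (1:ℝ)) n (CD.basis n α) (CD.basis n γ)) := CD.basis_anticomm hγs hαs hγe hαe (Ne.symm hag)
  have hdc : CD.mul (fun _ => (1:ℝ)) n (CD.basis n γ) (CD.basis n β) = -(CD.mul (fun _ => (1:ℝ)) n (CD.basis n β) (CD.basis n γ)) := CD.basis_anticomm hγs hβs hγe hβe (Ne.symm hbg)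
  have hcb : CD.mul (fun _ => (1:ℝ)) n (CD.basis n β) (CD.basis n α) = -(CD.mul (fun _ => (1:ℝ)) n (CD.basis n α) (CD.basis n β)) := CD.basis_anticomm hβs hαs hβe hαe (Ne.symm hab)
  have hEd : CD.mul (fun _ => (1:ℝ)) n (CD.basis n (α ∆ β ∆ γ)) (CD.basis n γ) = -(CD.mul (fun _ => (1:ℝ)) n (CD.basis n γ) (CD.basis n (α ∆ β ∆ γ))) := CD.basis_anticomm hAs hγs hAe hγe hAγ
  obtain ⟨s5, hs5, hp5⟩ := CD.mul_basis n γ (α ∆ β ∆ γ) hγs hAs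
  have hXne : (CD.mul (fun _ => (1:ℝ)) n (CD.basis n γ) (CD.basis n (α ∆ β ∆ γ))) ≠ 0 := by
    rw [hp5]
    intro e
    rcases CD.smul_eq_zero_iff' n _ _ e with h' | h'
    · rcases hs5 with h'' | h'' <;> rw [h''] at h' <;> norm_num at h'
    · exact CD.basis_ne_zero n _ h'
  -- m b c = (s1*s2) • X
  have hbc_eq : CD.mul (fun _ => (1:ℝ)) n (CD.basis n α) (CD.basis n β) = (s1 * s2) • (CD.mul (fun _ => (1:ℝ)) n (CD.basis n γ) (CD.basis n (α ∆ β ∆ γ))) := by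
    have e1 : CD.mul (fun _ => (1:ℝ)) n (CD.mul (fun _ => (1:ℝ)) n (CD.mul (fun _ => (1:ℝ)) n (CD.basis n α) (CD.basis n β)) (CD.basis n γ)) (CD.basis n γ) = -(CD.mul (fun _ => (1:ℝ)) n (CD.basis n α) (CD.basis n β)) := by
      rw [hq2 (CD.mul (fun _ => (1:ℝ)) n (CD.basis n α) (CD.basis n β)), neg_one_smul]
    have e2 : CD.mul (fun _ => (1:ℝ)) n (CD.mul (fun _ => (1:ℝ)) n (CD.mul (fun _ => (1:ℝ)) n (CD.basis n α) (CD.basis n β)) (CD.basis n γ)) (CD.basis n γ) = -((s1 * s2) • (CD.mul (fun _ => (1:ℝ)) n (CD.basis n γ) (CD.basis n (α ∆ β ∆ γ)))) := by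
      rw [h_bc_d, CD.smul_mul', hEd, smul_neg]
    rw [← neg_neg (CD.mul (fun _ => (1:ℝ)) n (CD.basis n α) (CD.basis n β)), ← e1, e2, neg_neg]
  have hRHS1 : CD.mul (fun _ => (1:ℝ)) n (CD.mul (fun _ => (1:ℝ)) n (CD.mul (fun _ => (1:ℝ)) n (CD.basis n γ) (CD.basis n α)) (CD.basis n γ)) (CD.basis n β) = (s1 * s2) • (CD.mul (fun _ => (1:ℝ)) n (CD.basis n γ) (CD.basis n (α ∆ β ∆ γ))) := by
    rw [hdb, CD.neg_mul', CD.neg_mul', hq2 (CD.basis n α), neg_one_smul, CD.neg_mul', neg_neg, hbc_eq]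
  have hLHS1 : CD.mul (fun _ => (1:ℝ)) n (CD.basis n γ) (CD.mul (fun _ => (1:ℝ)) n (CD.basis n α) (CD.mul (fun _ => (1:ℝ)) n (CD.basis n γ) (CD.basis n β))) = -((s3 * s4) • (CD.mul (fun _ => (1:ℝ)) n (CD.basis n γ) (CD.basis n (α ∆ β ∆ γ)))) := by
    rw [hdc, CD.mul_neg', CD.mul_neg', h_b_cd, CD.mul_smul']
  have hassoc1 : CD.assoc (fun _ => (1:ℝ)) n (CD.basis n α) (CD.basis n β) (CD.basis n γ) = (s1 * s2 - s3 * s4) • (CD.basis n (α ∆ β ∆ γ)) := by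
    rw [CD.assoc, h_bc_d, h_b_cd, ← sub_smul]
  -- second moufang pieces
  obtain ⟨s6, hs6, hp6⟩ := CD.mul_basis n α γ hαs hγs
  have hagSet : β ∆ (α ∆ γ) = (α ∆ β ∆ γ) := by
    rw [← symmDiff_assoc, symmDiff_comm β α]
  obtain ⟨s7, hs7, hp7⟩ := CD.mul_basis n β (α ∆ γ) hβs (CD.symmDiff_subset_Icc hαs hγs)
  rw [hagSet] at hp7
  have h_c_bd : CD.mul (fun _ => (1:ℝ)) n (CD.basis n β) (CD.mul (fun _ => (1:ℝ)) n (CD.basis n α) (CD.basis n γ)) = (s6 * s7) • (CD.basis n (α ∆ β ∆ γ)) := by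
    rw [hp6, CD.mul_smul', hp7, smul_smul, mul_comm]
  have hassoc2 : CD.assoc (fun _ => (1:ℝ)) n (CD.basis n β) (CD.basis n α) (CD.basis n γ) = (-(s1 * s2) - s6 * s7) • (CD.basis n (α ∆ β ∆ γ)) := by
    rw [CD.assoc, hcb, CD.neg_mul', h_bc_d, h_c_bd, ← neg_smul, ← sub_smul]
  have hαγe : α ∆ γ ≠ ∅ := by
    intro e
    exact hag (by simpa [symmDiff_eq_bot] using e)
  have hαγβ : α ∆ γ ≠ β := by
    intro e
    apply hγab
    have : α ∆ (α ∆ γ) = γ := symmDiff_symmDiff_cancel_left α γ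
    rw [← this, e]
  have h_bd_c : CD.mul (fun _ => (1:ℝ)) n (CD.mul (fun _ => (1:ℝ)) n (CD.basis n α) (CD.basis n γ)) (CD.basis n β) = -((s6 * s7) • (CD.basis n (α ∆ β ∆ γ))) := by
    have hanti : CD.mul (fun _ => (1:ℝ)) n (CD.basis n (α ∆ γ)) (CD.basis n β) = -(CD.mul (fun _ => (1:ℝ)) n (CD.basis n β) (CD.basis n (α ∆ γ))) :=
      CD.basis_anticomm (CD.symmDiff_subset_Icc hαs hγs) hβs hαγe hβe hαγβ
    rw [hp6, CD.smul_mul', hanti, hp7, smul_neg, smul_smul]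
  have hLHS2 : CD.mul (fun _ => (1:ℝ)) n (CD.basis n α) (CD.mul (fun _ => (1:ℝ)) n (CD.basis n γ) (CD.mul (fun _ => (1:ℝ)) n (CD.basis n β) (CD.basis n γ))) = (s1 * s2) • (CD.mul (fun _ => (1:ℝ)) n (CD.basis n γ) (CD.basis n (α ∆ β ∆ γ))) := by
    have : CD.mul (fun _ => (1:ℝ)) n (CD.basis n γ) (CD.mul (fun _ => (1:ℝ)) n (CD.basis n β) (CD.basis n γ)) = (CD.basis n β) := by
      rw [show CD.mul (fun _ => (1:ℝ)) n (CD.basis n β) (CD.basis n γ) = -(CD.mul (fun _ => (1:ℝ)) n (CD.basis n γ) (CD.basis n β)) from by rw [hdc, neg_neg],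
        CD.mul_neg', hq1 (CD.basis n β), neg_one_smul, neg_neg]
    rw [this, hbc_eq]
  have hRHS2 : CD.mul (fun _ => (1:ℝ)) n (CD.mul (fun _ => (1:ℝ)) n (CD.mul (fun _ => (1:ℝ)) n (CD.basis n α) (CD.basis n γ)) (CD.basis n β)) (CD.basis n γ) = (s6 * s7) • (CD.mul (fun _ => (1:ℝ)) n (CD.basis n γ) (CD.basis n (α ∆ β ∆ γ))) := by
    rw [h_bd_c, CD.neg_mul', CD.smul_mul', hEd, smul_neg, neg_neg]
  -- final: reduce both iffs
  simp only [CD.mul1, CD.assoc1]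
  constructor
  · rw [hLHS1, hRHS1, Ne, hassoc1, hp5]
    constructor
    · intro heq hz
      rcases CD.smul_eq_zero_iff' n _ _ hz with h' | h'
      · have hcoef : -(s3 * s4 * s5) = s1 * s2 * s5 := by
          have := heq
          rw [smul_smul, smul_smul, ← neg_smul] at this
          exact CD.smul_cancel (CD.basis_ne_zero n _) this
        rcases hs1 with e1 | e1 <;> rcases hs2 with e2 | e2 <;>
          rcases hs3 with e3 | e3 <;> rcases hs4 with e4 | e4 <;>
          rcases hs5 with e5 | e5 <;>
          rw [e1, e2, e3, e4] at h' hcoef <;> rw [e5] at hcoef <;> revert h' hcoef <;> norm_num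
      · exact hE h'
    · intro hne
      have hcoef : s1 * s2 = -(s3 * s4) := by
        have hd' : s1 * s2 - s3 * s4 ≠ 0 := by
          intro e; exact hne (by rw [e, zero_smul])
        rcases hs1 with e1 | e1 <;> rcases hs2 with e2 | e2 <;>
          rcases hs3 with e3 | e3 <;> rcases hs4 with e4 | e4 <;>
          rw [e1, e2, e3, e4] at hd' ⊢ <;> revert hd' <;> norm_num
      rw [hcoef, neg_smul]
  · rw [hLHS2, hRHS2, Ne, hassoc2, hp5]
    constructor
    · intro heq hz
      rcases CD.smul_eq_zero_iff' n _ _ hz with h' | h'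
      · have hcoef : s1 * s2 * s5 = s6 * s7 * s5 := by
          rw [smul_smul, smul_smul] at heq
          exact CD.smul_cancel (CD.basis_ne_zero n _) heq
        rcases hs1 with e1 | e1 <;> rcases hs2 with e2 | e2 <;>
          rcases hs6 with e6 | e6 <;> rcases hs7 with e7 | e7 <;>
          rcases hs5 with e5 | e5 <;>
          rw [e1, e2, e6, e7] at h' hcoef <;> rw [e5] at hcoef <;> revert h' hcoef <;> norm_num
      · exact hE h'
    · intro hne
      have hcoef : s1 * s2 = s6 * s7 := by
        have hd' : -(s1 * s2) - s6 * s7 ≠ 0 := by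
          intro e; exact hne (by rw [e, zero_smul])
        rcases hs1 with e1 | e1 <;> rcases hs2 with e2 | e2 <;>
          rcases hs6 with e6 | e6 <;> rcases hs7 with e7 | e7 <;>
          rw [e1, e2, e6, e7] at hd' ⊢ <;> revert hd' <;> norm_num
      rw [hcoef]
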